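/- If G is a finite perfect POEC group with a cyclic Sylow p-subgroup for some prime p dividing |G|, then we obtain a contradiction; i.e., a finite POEC group with a cyclic Sylow p-subgroup is not perfect. -/

import Mathlib

def POEC (G : Type*) [Group G] : Prop :=
  ∀ x y : G, (orderOf x).Prime → (orderOf y).Prime → Commute x y

theorem mulAut_comm_of_isCyclic {S : Type*} [Group S] [IsCyclic S] (f g : MulAut S) :
    f * g = g * f := by
  obtain ⟨σ, hσ⟩ := IsCyclic.exists_generator (α := S)
  obtain ⟨a, ha⟩ := hσ (f σ)
  obtain ⟨b, hb⟩ := hσ (g σ)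
  ext s
  obtain ⟨n, hn⟩ := hσ s
  simp only [MulAut.mul_apply, ← hn, map_zpow, ← hb, ← ha, ← zpow_mul]
  congr 1
  ring

theorem stmt_15 {G : Type*} [Group G] [Finite G] (h : POEC G) (p : ℕ)
    [Fact p.Prime] (hdvd : p ∣ Nat.card G) (P : Sylow p G) (hcyc : IsCyclic P) :
    commutator G ≠ ⊤ := by
  intro htop
  have hp : p.Prime := Fact.out
  -- an element of order p
  obtain ⟨x, hx⟩ := exists_prime_orderOf_dvd_card' p hdvd
  -- any two elements killed by p commute
  have key : ∀ a b : G, a ^ p = 1 → b ^ p = 1 → Commute a b := by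
    intro a b ha hb
    rcases eq_or_ne a 1 with rfl | ha1
    · exact Commute.one_left b
    rcases eq_or_ne b 1 with rfl | hb1
    · exact Commute.one_right a
    have hoa : orderOf a = p :=
      ((Nat.dvd_prime hp).mp (orderOf_dvd_of_pow_eq_one ha)).resolve_left
        (fun h' => ha1 (orderOf_eq_one_iff.mp h'))
    have hob : orderOf b = p :=
      ((Nat.dvd_prime hp).mp (orderOf_dvd_of_pow_eq_one hb)).resolve_left
        (fun h' => hb1 (orderOf_eq_one_iff.mp h'))
    exact h a b (hoa ▸ hp) (hob ▸ hp)
  -- the subgroup of elements killed by p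
  let S : Subgroup G :=
    { carrier := {g : G | g ^ p = 1}
      one_mem' := one_pow p
      mul_mem' := by
        intro a b ha hb
        have : (a * b) ^ p = a ^ p * b ^ p := (key a b ha hb).mul_pow p
        simp only [Set.mem_setOf_eq] at ha hb ⊢
        rw [this, ha, hb, one_mul]
      inv_mem' := by
        intro a ha
        simp only [Set.mem_setOf_eq] at ha ⊢
        rw [inv_pow, ha, inv_one] }
  have hSmem : ∀ g : G, g ∈ S ↔ g ^ p = 1 := fun g => Iff.rfl
  have hSnormal : S.Normal := by
    constructor
    intro n hn g
    rw [hSmem] at hn ⊢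
    rw [conj_pow, hn, mul_one, mul_inv_cancel]
  -- S is a p-group, hence contained in a Sylow p-subgroup
  have hSp : IsPGroup p S := by
    intro s
    refine ⟨1, ?_⟩
    ext
    rw [pow_one]
    exact s.2
  obtain ⟨Q, hSQ⟩ := hSp.exists_le_sylow
  -- Q is cyclic since all Sylow p-subgroups are isomorphic
  have hQcyc : IsCyclic Q := isCyclic_of_surjective _ (Sylow.equiv P Q).surjective
  have hScyc : IsCyclic S :=
    isCyclic_of_surjective _ (Subgroup.subgroupOfEquivOfLe hSQ).surjective
  -- conjugation action on S is trivial since G is perfect and Aut(S) is abelian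
  letI : S.Normal := hSnormal
  letI : CommGroup (MulAut S) :=
    { (inferInstance : Group (MulAut S)) with mul_comm := mulAut_comm_of_isCyclic }
  have hker : commutator G ≤ (MulAut.conjNormal (H := S) : G →* MulAut S).ker :=
    Abelianization.commutator_subset_ker _
  have hconj : ∀ g : G, ∀ s : S, g * (s : G) * g⁻¹ = s := by
    intro g s
    have hg : (MulAut.conjNormal (H := S) : G →* MulAut S) g = 1 := by
      have : g ∈ (MulAut.conjNormal (H := S) : G →* MulAut S).ker :=
        hker (htop ▸ Subgroup.mem_top g)
      exact this
    have := congrArg (fun (f : MulAut S) => ((f s : S) : G)) hg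
    simpa [MulAut.conjNormal_apply] using this
  -- hence x is central
  have hxS : x ∈ S := by rw [hSmem, ← hx]; exact pow_orderOf_eq_one x
  have hxZ : x ∈ Subgroup.center G := by
    rw [Subgroup.mem_center_iff]
    intro g
    have := hconj g ⟨x, hxS⟩
    calc g * x = g * x * g⁻¹ * g := by group
    _ = x * g := by rw [this]
  -- transfer: every element satisfies g ^ [G : Z(G)] = 1
  haveI : (Subgroup.center G).FiniteIndex := inferInstance
  have hexp : ∀ g : G, g ^ (Subgroup.center G).index = 1 := by
    intro g
    letI : CommGroup (Subgroup.center G) :=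
      { (inferInstance : Group (Subgroup.center G)) with
        mul_comm := fun a b => Subtype.ext (b.2.comm a).symm }
    have hker2 : commutator G ≤ (MonoidHom.transferCenterPow G).ker :=
      Abelianization.commutator_subset_ker _
    have hg : MonoidHom.transferCenterPow G g = 1 := hker2 (htop ▸ Subgroup.mem_top g)
    have := MonoidHom.transferCenterPow_apply (G := G) g
    rw [hg] at this
    exact this.symm
  -- the cyclic Sylow P has an element of order |P| = p ^ n
  obtain ⟨y, hy⟩ := IsCyclic.exists_generator (α := P)
  have hyord : orderOf (y : G) = Nat.card P := by
    rw [orderOf_submonoid, orderOf_eq_card_of_forall_mem_zpowers hy]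
  have hcardP : Nat.card P = p ^ (Nat.card G).factorization p := P.card_eq_multiplicity
  -- p ^ n divides the index of the center
  have h1 : p ^ (Nat.card G).factorization p ∣ (Subgroup.center G).index := by
    rw [← hcardP, ← hyord]
    exact orderOf_dvd_of_pow_eq_one (hexp (y : G))
  -- p divides the order of the center
  have h2 : p ∣ Nat.card (Subgroup.center G) := by
    rw [← hx]
    exact (Subgroup.center G).orderOf_dvd_natCard hxZ
  have h3 : p ^ ((Nat.card G).factorization p + 1) ∣ Nat.card G := by
    have := mul_dvd_mul h2 h1
    rwa [(Subgroup.center G).card_mul_index, ← pow_succ'] at this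
  have hG0 : Nat.card G ≠ 0 := Nat.card_pos.ne'
  have := (Nat.Prime.pow_dvd_iff_le_factorization hp hG0).mp h3
  omega
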